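/- Let G be a locally compact Hausdorff groupoid with open range and source maps and let U ⊆ G^(0) be a full open subset, i.e. G_U ∘ G^U = G (every γ ∈ G can be written γ = γ₁γ₂ with s(γ₁) = r(γ₂) ∈ U). Then G_U^U := r⁻¹(U) ∩ s⁻¹(U), with the restricted operations, is a locally compact Hausdorff groupoid with open range and source maps, and G^U := r⁻¹(U), equipped with the left G_U^U-action and the right G-action given by multiplication, is a G_U^U-G-equivalence. -/

import Mathlib

/-! ## Topological groupoids, actions, equivalences -/

universe u v w x y z

/-- A topological groupoid structure on a space `G` of morphisms over a space `O` of objects.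
The multiplication is a total function which is only meaningful on composable pairs
(pairs `(γ, γ')` with `s γ = r γ'`). -/
structure TopGroupoid (G : Type u) (O : Type v)
    [TopologicalSpace G] [TopologicalSpace O] where
  r : G → O
  s : G → O
  unit : O → G
  mul : G → G → G
  inv : G → G
  r_unit : ∀ x, r (unit x) = x
  s_unit : ∀ x, s (unit x) = x
  r_mul : ∀ γ γ', s γ = r γ' → r (mul γ γ') = r γ
  s_mul : ∀ γ γ', s γ = r γ' → s (mul γ γ') = s γ'
  mul_assoc : ∀ γ₁ γ₂ γ₃, s γ₁ = r γ₂ → s γ₂ = r γ₃ →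
    mul (mul γ₁ γ₂) γ₃ = mul γ₁ (mul γ₂ γ₃)
  unit_mul : ∀ γ, mul (unit (r γ)) γ = γ
  mul_unit : ∀ γ, mul γ (unit (s γ)) = γ
  r_inv : ∀ γ, r (inv γ) = s γ
  s_inv : ∀ γ, s (inv γ) = r γ
  mul_inv : ∀ γ, mul γ (inv γ) = unit (r γ)
  inv_mul : ∀ γ, mul (inv γ) γ = unit (s γ)
  continuous_r : Continuous r
  continuous_s : Continuous s
  continuous_unit : Continuous unit
  continuous_inv : Continuous inv
  continuousOn_mul : ContinuousOn (fun p : G × G => mul p.1 p.2) {p | s p.1 = r p.2}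

/-- A groupoid "with open range and source maps". -/
def TopGroupoid.OpenMaps {G : Type u} {O : Type v} [TopologicalSpace G] [TopologicalSpace O]
    (𝒢 : TopGroupoid G O) : Prop :=
  IsOpenMap 𝒢.r ∧ IsOpenMap 𝒢.s

/-- A "locally compact Hausdorff groupoid" is a topological groupoid whose total space (and
hence unit space) is locally compact Hausdorff; we record this as a property. -/
def TopGroupoid.IsLCH {G : Type u} {O : Type v} [TopologicalSpace G] [TopologicalSpace O]
    (_ : TopGroupoid G O) : Prop :=
  LocallyCompactSpace G ∧ T2Space G ∧ LocallyCompactSpace O ∧ T2Space O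

/-- A continuous left action of a topological groupoid on a space `Ω` with anchor map `ρ`.
Again the action map is total but only meaningful on composable pairs. -/
structure GLeftAction {G : Type u} {O : Type v} [TopologicalSpace G] [TopologicalSpace O]
    (𝒢 : TopGroupoid G O) (Ω : Type w) [TopologicalSpace Ω] where
  ρ : Ω → O
  act : G → Ω → Ω
  continuous_ρ : Continuous ρ
  ρ_act : ∀ γ ω, 𝒢.s γ = ρ ω → ρ (act γ ω) = 𝒢.r γ
  unit_act : ∀ ω, act (𝒢.unit (ρ ω)) ω = ω
  mul_act : ∀ γ γ' ω, 𝒢.s γ = 𝒢.r γ' → 𝒢.s γ' = ρ ω →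
    act (𝒢.mul γ γ') ω = act γ (act γ' ω)
  continuousOn_act : ContinuousOn (fun p : G × Ω => act p.1 p.2) {p | 𝒢.s p.1 = ρ p.2}

/-- A continuous right action of a topological groupoid on a space `Ω` with anchor map `σ`. -/
structure GRightAction {H : Type u} {P : Type v} [TopologicalSpace H] [TopologicalSpace P]
    (ℋ : TopGroupoid H P) (Ω : Type w) [TopologicalSpace Ω] where
  σ : Ω → P
  act : Ω → H → Ω
  continuous_σ : Continuous σ
  σ_act : ∀ ω η, σ ω = ℋ.r η → σ (act ω η) = ℋ.s η
  act_unit : ∀ ω, act ω (ℋ.unit (σ ω)) = ω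
  act_mul : ∀ ω η η', σ ω = ℋ.r η → ℋ.s η = ℋ.r η' →
    act ω (ℋ.mul η η') = act (act ω η) η'
  continuousOn_act : ContinuousOn (fun p : Ω × H => act p.1 p.2) {p | σ p.1 = ℋ.r p.2}

namespace GLeftAction

variable {G : Type u} {O : Type v} [TopologicalSpace G] [TopologicalSpace O]
variable {𝒢 : TopGroupoid G O} {Ω : Type w} [TopologicalSpace Ω]

/-- Freeness of a left groupoid action. -/
def Free (a : GLeftAction 𝒢 Ω) : Prop :=
  ∀ γ ω, 𝒢.s γ = a.ρ ω → a.act γ ω = ω → γ = 𝒢.unit (a.ρ ω)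

/-- Properness of a left groupoid action: the map `(γ, ω) ↦ (γ·ω, ω)` on the space of
composable pairs is a proper map. -/
def Proper (a : GLeftAction 𝒢 Ω) : Prop :=
  IsProperMap (fun p : {p : G × Ω // 𝒢.s p.1 = a.ρ p.2} =>
    ((a.act p.1.1 p.1.2, p.1.2) : Ω × Ω))

end GLeftAction

namespace GRightAction

variable {H : Type u} {P : Type v} [TopologicalSpace H] [TopologicalSpace P]
variable {ℋ : TopGroupoid H P} {Ω : Type w} [TopologicalSpace Ω]

/-- Freeness of a right groupoid action. -/
def Free (a : GRightAction ℋ Ω) : Prop :=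
  ∀ ω η, a.σ ω = ℋ.r η → a.act ω η = ω → η = ℋ.unit (a.σ ω)

/-- Properness of a right groupoid action. -/
def Proper (a : GRightAction ℋ Ω) : Prop :=
  IsProperMap (fun p : {p : Ω × H // a.σ p.1 = ℋ.r p.2} =>
    ((a.act p.1.1 p.1.2, p.1.1) : Ω × Ω))

end GRightAction

/-- A `𝒢`-`ℋ`-bimodule: commuting continuous left `𝒢`- and right `ℋ`-actions on `Ω`. -/
structure GBimodule {G : Type u} {O : Type v} {H : Type w} {P : Type x}
    [TopologicalSpace G] [TopologicalSpace O] [TopologicalSpace H] [TopologicalSpace P]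
    (𝒢 : TopGroupoid G O) (ℋ : TopGroupoid H P) (Ω : Type y) [TopologicalSpace Ω] where
  left : GLeftAction 𝒢 Ω
  right : GRightAction ℋ Ω
  σ_actl : ∀ γ ω, 𝒢.s γ = left.ρ ω → right.σ (left.act γ ω) = right.σ ω
  ρ_actr : ∀ ω η, right.σ ω = ℋ.r η → left.ρ (right.act ω η) = left.ρ ω
  commute : ∀ γ ω η, 𝒢.s γ = left.ρ ω → right.σ ω = ℋ.r η →
    left.act γ (right.act ω η) = right.act (left.act γ ω) η

/-- A graph ("generalised morphism datum") from `𝒢` to `ℋ`: a bimodule whose left anchor map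
`ρ` is a principal fibration with structure groupoid `ℋ`. -/
structure IsGraph {G : Type u} {O : Type v} {H : Type w} {P : Type x}
    [TopologicalSpace G] [TopologicalSpace O] [TopologicalSpace H] [TopologicalSpace P]
    {𝒢 : TopGroupoid G O} {ℋ : TopGroupoid H P} {Ω : Type y} [TopologicalSpace Ω]
    (M : GBimodule 𝒢 ℋ Ω) : Prop where
  free_right : M.right.Free
  proper_right : M.right.Proper
  ρ_open : IsOpenMap M.left.ρ
  ρ_surj : Function.Surjective M.left.ρ
  fibre_trans : ∀ ω ω', M.left.ρ ω = M.left.ρ ω' →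
    ∃ η, M.right.σ ω = ℋ.r η ∧ M.right.act ω η = ω'

/-- A `𝒢`-`ℋ`-equivalence bimodule. -/
structure IsEquivalence {G : Type u} {O : Type v} {H : Type w} {P : Type x}
    [TopologicalSpace G] [TopologicalSpace O] [TopologicalSpace H] [TopologicalSpace P]
    {𝒢 : TopGroupoid G O} {ℋ : TopGroupoid H P} {Ω : Type y} [TopologicalSpace Ω]
    (M : GBimodule 𝒢 ℋ Ω) : Prop where
  free_left : M.left.Free
  proper_left : M.left.Proper
  free_right : M.right.Free
  proper_right : M.right.Proper
  ρ_open : IsOpenMap M.left.ρ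
  ρ_surj : Function.Surjective M.left.ρ
  /-- the fibres of `ρ` are exactly the `ℋ`-orbits, i.e. `ρ` induces a homeomorphism
  `Ω/ℋ ≅ 𝒢⁽⁰⁾` (openness + surjectivity + this condition). -/
  ρ_fibres : ∀ ω ω', M.left.ρ ω = M.left.ρ ω' ↔
    ∃ η, M.right.σ ω = ℋ.r η ∧ M.right.act ω η = ω'
  σ_open : IsOpenMap M.right.σ
  σ_surj : Function.Surjective M.right.σ
  /-- the fibres of `σ` are exactly the `𝒢`-orbits, i.e. `σ` induces a homeomorphism
  `𝒢\Ω ≅ ℋ⁽⁰⁾`. -/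
  σ_fibres : ∀ ω ω', M.right.σ ω = M.right.σ ω' ↔
    ∃ γ, 𝒢.s γ = M.left.ρ ω ∧ M.left.act γ ω = ω'

/-- A strict morphism of topological groupoids (a continuous functor). -/
structure StrictMorphism {G : Type u} {O : Type v} {H : Type w} {P : Type x}
    [TopologicalSpace G] [TopologicalSpace O] [TopologicalSpace H] [TopologicalSpace P]
    (𝒢 : TopGroupoid G O) (ℋ : TopGroupoid H P) where
  toFun : G → H
  obj : O → P
  continuous_toFun : Continuous toFun
  continuous_obj : Continuous obj
  map_unit : ∀ x, toFun (𝒢.unit x) = ℋ.unit (obj x)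
  map_r : ∀ γ, ℋ.r (toFun γ) = obj (𝒢.r γ)
  map_s : ∀ γ, ℋ.s (toFun γ) = obj (𝒢.s γ)
  map_mul : ∀ γ γ', 𝒢.s γ = 𝒢.r γ' → toFun (𝒢.mul γ γ') = ℋ.mul (toFun γ) (toFun γ')

/-- The carrier of the pullback groupoid `p*(𝒢)` along `p : Y → 𝒢⁽⁰⁾`. -/
def PullbackCarrier {G : Type u} {O : Type v} [TopologicalSpace G] [TopologicalSpace O]
    (𝒢 : TopGroupoid G O) {Y : Type w} [TopologicalSpace Y] (p : Y → O) : Type (max u w) :=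
  {t : Y × G × Y // p t.1 = 𝒢.r t.2.1 ∧ 𝒢.s t.2.1 = p t.2.2}

instance {G : Type u} {O : Type v} [TopologicalSpace G] [TopologicalSpace O]
    (𝒢 : TopGroupoid G O) {Y : Type w} [TopologicalSpace Y] (p : Y → O) :
    TopologicalSpace (PullbackCarrier 𝒢 p) :=
  instTopologicalSpaceSubtype

/-- A topological groupoid structure on `PullbackCarrier 𝒢 p` realises the pullback groupoid
`p*(𝒢)` if its structure maps are the canonical ones. -/
structure IsPullbackGroupoid {G : Type u} {O : Type v} [TopologicalSpace G] [TopologicalSpace O]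
    (𝒢 : TopGroupoid G O) {Y : Type w} [TopologicalSpace Y] (p : Y → O)
    (PB : TopGroupoid (PullbackCarrier 𝒢 p) Y) : Prop where
  r_eq : ∀ t : PullbackCarrier 𝒢 p, PB.r t = t.1.1
  s_eq : ∀ t : PullbackCarrier 𝒢 p, PB.s t = t.1.2.2
  unit_eq : ∀ y : Y, (PB.unit y).1 = (y, 𝒢.unit (p y), y)
  mul_eq : ∀ t t' : PullbackCarrier 𝒢 p, t.1.2.2 = t'.1.1 →
    (PB.mul t t').1 = (t.1.1, 𝒢.mul t.1.2.1 t'.1.2.1, t'.1.2.2)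
  inv_eq : ∀ t : PullbackCarrier 𝒢 p, (PB.inv t).1 = (t.1.2.2, 𝒢.inv t.1.2.1, t.1.1)

/-! ## Statement 1: restriction of a groupoid to a full open subset of its unit space -/

section Statement1

variable {G : Type u} {O : Type v}
variable [TopologicalSpace G] [TopologicalSpace O]


namespace FullOpenAux

open Classical

variable (𝒢 : TopGroupoid G O) (U : Set O)

/-! ### Cancellation lemmas in a topological groupoid -/

lemma cancel₁ {α ω : G} (h : 𝒢.s α = 𝒢.s ω) :
    𝒢.mul (𝒢.mul α (𝒢.inv ω)) ω = α := by
  rw [𝒢.mul_assoc _ _ _ (by rw [𝒢.r_inv]; exact h) (𝒢.s_inv ω), 𝒢.inv_mul, ← h, 𝒢.mul_unit]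

lemma cancel₂ {α ω : G} (h : 𝒢.r α = 𝒢.r ω) :
    𝒢.mul ω (𝒢.mul (𝒢.inv ω) α) = α := by
  rw [← 𝒢.mul_assoc _ _ _ (𝒢.r_inv ω).symm (by rw [𝒢.s_inv]; exact h.symm),
    𝒢.mul_inv, ← h, 𝒢.unit_mul]

lemma cancel₃ {γ ω : G} (h : 𝒢.s γ = 𝒢.r ω) :
    𝒢.mul (𝒢.mul γ ω) (𝒢.inv ω) = γ := by
  rw [𝒢.mul_assoc _ _ _ h (𝒢.r_inv ω).symm, 𝒢.mul_inv, ← h, 𝒢.mul_unit]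

lemma cancel₄ {ω η : G} (h : 𝒢.s ω = 𝒢.r η) :
    𝒢.mul (𝒢.inv ω) (𝒢.mul ω η) = η := by
  rw [← 𝒢.mul_assoc _ _ _ (𝒢.s_inv ω) h, 𝒢.inv_mul, h, 𝒢.unit_mul]

/-! ### The restricted groupoid -/

/-- Multiplication on `G_U^U` (junk value off the composable set). -/
noncomputable def rmul (γ γ' : {γ : G // 𝒢.r γ ∈ U ∧ 𝒢.s γ ∈ U}) :
    {γ : G // 𝒢.r γ ∈ U ∧ 𝒢.s γ ∈ U} :=
  if h : 𝒢.s γ.1 = 𝒢.r γ'.1 then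
    ⟨𝒢.mul γ.1 γ'.1, by rw [𝒢.r_mul _ _ h, 𝒢.s_mul _ _ h]; exact ⟨γ.2.1, γ'.2.2⟩⟩
  else γ

lemma rmul_val {γ γ' : {γ : G // 𝒢.r γ ∈ U ∧ 𝒢.s γ ∈ U}} (h : 𝒢.s γ.1 = 𝒢.r γ'.1) :
    (rmul 𝒢 U γ γ').1 = 𝒢.mul γ.1 γ'.1 := by
  unfold rmul; rw [dif_pos h]

/-- The restriction of `𝒢` to the full open subset `U`. -/
noncomputable def res : TopGroupoid {γ : G // 𝒢.r γ ∈ U ∧ 𝒢.s γ ∈ U} {x : O // x ∈ U} where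
  r γ := ⟨𝒢.r γ.1, γ.2.1⟩
  s γ := ⟨𝒢.s γ.1, γ.2.2⟩
  unit x := ⟨𝒢.unit x.1, by rw [𝒢.r_unit, 𝒢.s_unit]; exact ⟨x.2, x.2⟩⟩
  mul := rmul 𝒢 U
  inv γ := ⟨𝒢.inv γ.1, by rw [𝒢.r_inv, 𝒢.s_inv]; exact ⟨γ.2.2, γ.2.1⟩⟩
  r_unit x := Subtype.ext (𝒢.r_unit x.1)
  s_unit x := Subtype.ext (𝒢.s_unit x.1)
  r_mul γ γ' h := by
    have h' : 𝒢.s γ.1 = 𝒢.r γ'.1 := congrArg Subtype.val h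
    refine Subtype.ext ?_
    show 𝒢.r (rmul 𝒢 U γ γ').1 = 𝒢.r γ.1
    rw [rmul_val 𝒢 U h']; exact 𝒢.r_mul _ _ h'
  s_mul γ γ' h := by
    have h' : 𝒢.s γ.1 = 𝒢.r γ'.1 := congrArg Subtype.val h
    refine Subtype.ext ?_
    show 𝒢.s (rmul 𝒢 U γ γ').1 = 𝒢.s γ'.1
    rw [rmul_val 𝒢 U h']; exact 𝒢.s_mul _ _ h'
  mul_assoc γ₁ γ₂ γ₃ h1 h2 := by
    have h1' : 𝒢.s γ₁.1 = 𝒢.r γ₂.1 := congrArg Subtype.val h1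
    have h2' : 𝒢.s γ₂.1 = 𝒢.r γ₃.1 := congrArg Subtype.val h2
    have h12 : 𝒢.s (rmul 𝒢 U γ₁ γ₂).1 = 𝒢.r γ₃.1 := by
      rw [rmul_val 𝒢 U h1', 𝒢.s_mul _ _ h1']; exact h2'
    have h23 : 𝒢.s γ₁.1 = 𝒢.r (rmul 𝒢 U γ₂ γ₃).1 := by
      rw [rmul_val 𝒢 U h2', 𝒢.r_mul _ _ h2']; exact h1'
    refine Subtype.ext ?_
    show (rmul 𝒢 U (rmul 𝒢 U γ₁ γ₂) γ₃).1 = (rmul 𝒢 U γ₁ (rmul 𝒢 U γ₂ γ₃)).1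
    rw [rmul_val 𝒢 U h12, rmul_val 𝒢 U h1', rmul_val 𝒢 U h23, rmul_val 𝒢 U h2']
    exact 𝒢.mul_assoc _ _ _ h1' h2'
  unit_mul γ :=
    Subtype.ext ((rmul_val 𝒢 U (𝒢.s_unit _)).trans (𝒢.unit_mul γ.1))
  mul_unit γ :=
    Subtype.ext ((rmul_val 𝒢 U (𝒢.r_unit _).symm).trans (𝒢.mul_unit γ.1))
  r_inv γ := Subtype.ext (𝒢.r_inv γ.1)
  s_inv γ := Subtype.ext (𝒢.s_inv γ.1)
  mul_inv γ :=
    Subtype.ext ((rmul_val 𝒢 U (𝒢.r_inv _).symm).trans (𝒢.mul_inv γ.1))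
  inv_mul γ :=
    Subtype.ext ((rmul_val 𝒢 U (𝒢.s_inv _)).trans (𝒢.inv_mul γ.1))
  continuous_r := (𝒢.continuous_r.comp continuous_subtype_val).subtype_mk _
  continuous_s := (𝒢.continuous_s.comp continuous_subtype_val).subtype_mk _
  continuous_unit := (𝒢.continuous_unit.comp continuous_subtype_val).subtype_mk
    (fun x => by show 𝒢.r (𝒢.unit x.1) ∈ U ∧ 𝒢.s (𝒢.unit x.1) ∈ U
                 rw [𝒢.r_unit, 𝒢.s_unit]; exact ⟨x.2, x.2⟩)
  continuous_inv := (𝒢.continuous_inv.comp continuous_subtype_val).subtype_mk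
    (fun γ => by show 𝒢.r (𝒢.inv γ.1) ∈ U ∧ 𝒢.s (𝒢.inv γ.1) ∈ U
                 rw [𝒢.r_inv, 𝒢.s_inv]; exact ⟨γ.2.2, γ.2.1⟩)
  continuousOn_mul := by
    rw [Topology.IsEmbedding.subtypeVal.isInducing.continuousOn_iff]
    refine ContinuousOn.congr (f := fun p => 𝒢.mul p.1.1 p.2.1) ?_ ?_
    · exact 𝒢.continuousOn_mul.comp
        (Continuous.continuousOn ((continuous_subtype_val.comp continuous_fst).prodMk
          (continuous_subtype_val.comp continuous_snd)))
        (fun p hp => congrArg Subtype.val hp)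
    · intro p hp
      exact rmul_val 𝒢 U (congrArg Subtype.val hp)

/-! ### Openness of restricted maps -/

lemma isOpenMap_restr {X : Type y} {Y : Type z} [TopologicalSpace X] [TopologicalSpace Y]
    {q : X → Y} (hq : IsOpenMap q) {A : Set X} (hA : IsOpen A) {B : Set Y}
    (f : A → B) (hf : ∀ a : A, (f a : Y) = q a.1) : IsOpenMap f := by
  intro V hV
  obtain ⟨W, hW, hWV⟩ := isOpen_induced_iff.mp hV
  have : f '' V = Subtype.val ⁻¹' (q '' (W ∩ A)) := by
    ext b
    constructor
    · rintro ⟨a, haV, rfl⟩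
      exact ⟨a.1, ⟨by rw [← hWV] at haV; exact haV, a.2⟩, (hf a).symm⟩
    · rintro ⟨x, ⟨hxW, hxA⟩, hqx⟩
      refine ⟨⟨x, hxA⟩, ?_, ?_⟩
      · rw [← hWV]; exact hxW
      · exact Subtype.ext (by rw [hf]; exact hqx)
  rw [this]
  exact (hq _ (hW.inter hA)).preimage continuous_subtype_val

lemma res_openMaps (h𝒢 : 𝒢.OpenMaps) (hU : IsOpen U) : (res 𝒢 U).OpenMaps := by
  constructor
  · exact isOpenMap_restr h𝒢.1
      ((hU.preimage 𝒢.continuous_r).inter (hU.preimage 𝒢.continuous_s))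
      ((res 𝒢 U).r) (fun a => rfl)
  · exact isOpenMap_restr h𝒢.2
      ((hU.preimage 𝒢.continuous_r).inter (hU.preimage 𝒢.continuous_s))
      ((res 𝒢 U).s) (fun a => rfl)

/-! ### The bimodule `G^U` -/

/-- The left action of `G_U^U` on `G^U` by multiplication. -/
noncomputable def lact (γ : {γ : G // 𝒢.r γ ∈ U ∧ 𝒢.s γ ∈ U}) (ω : {γ : G // 𝒢.r γ ∈ U}) :
    {γ : G // 𝒢.r γ ∈ U} :=
  if h : 𝒢.s γ.1 = 𝒢.r ω.1 then ⟨𝒢.mul γ.1 ω.1, by rw [𝒢.r_mul _ _ h]; exact γ.2.1⟩ else ω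

lemma lact_val {γ : {γ : G // 𝒢.r γ ∈ U ∧ 𝒢.s γ ∈ U}} {ω : {γ : G // 𝒢.r γ ∈ U}}
    (h : 𝒢.s γ.1 = 𝒢.r ω.1) : (lact 𝒢 U γ ω).1 = 𝒢.mul γ.1 ω.1 := by
  unfold lact; rw [dif_pos h]

/-- The right action of `𝒢` on `G^U` by multiplication. -/
noncomputable def ract (ω : {γ : G // 𝒢.r γ ∈ U}) (η : G) : {γ : G // 𝒢.r γ ∈ U} :=
  if h : 𝒢.s ω.1 = 𝒢.r η then ⟨𝒢.mul ω.1 η, by rw [𝒢.r_mul _ _ h]; exact ω.2⟩ else ω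

lemma ract_val {ω : {γ : G // 𝒢.r γ ∈ U}} {η : G}
    (h : 𝒢.s ω.1 = 𝒢.r η) : (ract 𝒢 U ω η).1 = 𝒢.mul ω.1 η := by
  unfold ract; rw [dif_pos h]

/-- The left action structure. -/
noncomputable def leftA : GLeftAction (res 𝒢 U) {γ : G // 𝒢.r γ ∈ U} where
  ρ ω := ⟨𝒢.r ω.1, ω.2⟩
  act := lact 𝒢 U
  continuous_ρ := (𝒢.continuous_r.comp continuous_subtype_val).subtype_mk _
  ρ_act γ ω h := by
    have h' : 𝒢.s γ.1 = 𝒢.r ω.1 := congrArg Subtype.val h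
    refine Subtype.ext ?_
    show 𝒢.r (lact 𝒢 U γ ω).1 = 𝒢.r γ.1
    rw [lact_val 𝒢 U h']; exact 𝒢.r_mul _ _ h'
  unit_act ω :=
    Subtype.ext ((lact_val 𝒢 U (𝒢.s_unit _)).trans (𝒢.unit_mul ω.1))
  mul_act γ γ' ω h1 h2 := by
    have h1' : 𝒢.s γ.1 = 𝒢.r γ'.1 := congrArg Subtype.val h1
    have h2' : 𝒢.s γ'.1 = 𝒢.r ω.1 := congrArg Subtype.val h2
    have h12 : 𝒢.s (rmul 𝒢 U γ γ').1 = 𝒢.r ω.1 := by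
      rw [rmul_val 𝒢 U h1', 𝒢.s_mul _ _ h1']; exact h2'
    have h23 : 𝒢.s γ.1 = 𝒢.r (lact 𝒢 U γ' ω).1 := by
      rw [lact_val 𝒢 U h2', 𝒢.r_mul _ _ h2']; exact h1'
    refine Subtype.ext ?_
    show (lact 𝒢 U (rmul 𝒢 U γ γ') ω).1 = (lact 𝒢 U γ (lact 𝒢 U γ' ω)).1
    rw [lact_val 𝒢 U h12, rmul_val 𝒢 U h1', lact_val 𝒢 U h23, lact_val 𝒢 U h2']
    exact 𝒢.mul_assoc _ _ _ h1' h2'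
  continuousOn_act := by
    rw [Topology.IsEmbedding.subtypeVal.isInducing.continuousOn_iff]
    refine ContinuousOn.congr (f := fun p => 𝒢.mul p.1.1 p.2.1) ?_ ?_
    · exact 𝒢.continuousOn_mul.comp
        (Continuous.continuousOn ((continuous_subtype_val.comp continuous_fst).prodMk
          (continuous_subtype_val.comp continuous_snd)))
        (fun p hp => congrArg Subtype.val hp)
    · intro p hp
      exact lact_val 𝒢 U (congrArg Subtype.val hp)

/-- The right action structure. -/
noncomputable def rightA : GRightAction 𝒢 {γ : G // 𝒢.r γ ∈ U} where
  σ ω := 𝒢.s ω.1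
  act := ract 𝒢 U
  continuous_σ := 𝒢.continuous_s.comp continuous_subtype_val
  σ_act ω η h := by
    show 𝒢.s (ract 𝒢 U ω η).1 = 𝒢.s η
    rw [ract_val 𝒢 U h]; exact 𝒢.s_mul _ _ h
  act_unit ω := by
    have h : 𝒢.s ω.1 = 𝒢.r (𝒢.unit (𝒢.s ω.1)) := (𝒢.r_unit _).symm
    refine Subtype.ext ?_
    show (ract 𝒢 U ω (𝒢.unit (𝒢.s ω.1))).1 = ω.1
    rw [ract_val 𝒢 U h]; exact 𝒢.mul_unit ω.1
  act_mul ω η η' h1 h2 := by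
    have h1' : 𝒢.s ω.1 = 𝒢.r η := h1
    have h12 : 𝒢.s ω.1 = 𝒢.r (𝒢.mul η η') := by rw [𝒢.r_mul _ _ h2]; exact h1'
    have h3 : 𝒢.s (ract 𝒢 U ω η).1 = 𝒢.r η' := by
      rw [ract_val 𝒢 U h1', 𝒢.s_mul _ _ h1']; exact h2
    refine Subtype.ext ?_
    show (ract 𝒢 U ω (𝒢.mul η η')).1 = (ract 𝒢 U (ract 𝒢 U ω η) η').1
    rw [ract_val 𝒢 U h12, ract_val 𝒢 U h3, ract_val 𝒢 U h1']
    exact (𝒢.mul_assoc _ _ _ h1' h2).symm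
  continuousOn_act := by
    rw [Topology.IsEmbedding.subtypeVal.isInducing.continuousOn_iff]
    refine ContinuousOn.congr (f := fun p => 𝒢.mul p.1.1 p.2) ?_ ?_
    · exact 𝒢.continuousOn_mul.comp
        (Continuous.continuousOn ((continuous_subtype_val.comp continuous_fst).prodMk
          continuous_snd))
        (fun p hp => hp)
    · intro p hp
      exact ract_val 𝒢 U hp

/-- The bimodule structure on `G^U`. -/
noncomputable def bim : GBimodule (res 𝒢 U) 𝒢 {γ : G // 𝒢.r γ ∈ U} where
  left := leftA 𝒢 U
  right := rightA 𝒢 U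
  σ_actl γ ω h := by
    have h' : 𝒢.s γ.1 = 𝒢.r ω.1 := congrArg Subtype.val h
    show 𝒢.s (lact 𝒢 U γ ω).1 = 𝒢.s ω.1
    rw [lact_val 𝒢 U h']; exact 𝒢.s_mul _ _ h'
  ρ_actr ω η h := by
    refine Subtype.ext ?_
    show 𝒢.r (ract 𝒢 U ω η).1 = 𝒢.r ω.1
    rw [ract_val 𝒢 U h]; exact 𝒢.r_mul _ _ h
  commute γ ω η h1 h2 := by
    have h1' : 𝒢.s γ.1 = 𝒢.r ω.1 := congrArg Subtype.val h1
    have h2' : 𝒢.s ω.1 = 𝒢.r η := h2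
    have hro : 𝒢.s γ.1 = 𝒢.r (ract 𝒢 U ω η).1 := by
      rw [ract_val 𝒢 U h2', 𝒢.r_mul _ _ h2']; exact h1'
    have hsl : 𝒢.s (lact 𝒢 U γ ω).1 = 𝒢.r η := by
      rw [lact_val 𝒢 U h1', 𝒢.s_mul _ _ h1']; exact h2'
    refine Subtype.ext ?_
    show (lact 𝒢 U γ (ract 𝒢 U ω η)).1 = (ract 𝒢 U (lact 𝒢 U γ ω) η).1
    rw [lact_val 𝒢 U hro, ract_val 𝒢 U h2', ract_val 𝒢 U hsl, lact_val 𝒢 U h1']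
    exact (𝒢.mul_assoc _ _ _ h1' h2').symm

/-! ### Freeness -/

lemma leftA_free : (leftA 𝒢 U).Free := by
  intro γ ω h hact
  have h' : 𝒢.s γ.1 = 𝒢.r ω.1 := congrArg Subtype.val h
  have hm : 𝒢.mul γ.1 ω.1 = ω.1 := by
    rw [← lact_val 𝒢 U h']; exact congrArg Subtype.val hact
  refine Subtype.ext ?_
  show γ.1 = 𝒢.unit (𝒢.r ω.1)
  calc γ.1 = 𝒢.mul (𝒢.mul γ.1 ω.1) (𝒢.inv ω.1) := (cancel₃ 𝒢 h').symm
    _ = 𝒢.mul ω.1 (𝒢.inv ω.1) := by rw [hm]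
    _ = 𝒢.unit (𝒢.r ω.1) := 𝒢.mul_inv ω.1

lemma rightA_free : (rightA 𝒢 U).Free := by
  intro ω η h hact
  have h' : 𝒢.s ω.1 = 𝒢.r η := h
  have hm : 𝒢.mul ω.1 η = ω.1 := by
    rw [← ract_val 𝒢 U h']; exact congrArg Subtype.val hact
  show η = 𝒢.unit (𝒢.s ω.1)
  calc η = 𝒢.mul (𝒢.inv ω.1) (𝒢.mul ω.1 η) := (cancel₄ 𝒢 h').symm
    _ = 𝒢.mul (𝒢.inv ω.1) ω.1 := by rw [hm]
    _ = 𝒢.unit (𝒢.s ω.1) := 𝒢.inv_mul ω.1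

/-! ### Properness of the left action -/

/-- Domain of the left propriety map. -/
abbrev LD := {p : {γ : G // 𝒢.r γ ∈ U ∧ 𝒢.s γ ∈ U} × {γ : G // 𝒢.r γ ∈ U} //
  (res 𝒢 U).s p.1 = (leftA 𝒢 U).ρ p.2}

/-- Codomain (graph of equal sources). -/
abbrev LC := {q : {γ : G // 𝒢.r γ ∈ U} × {γ : G // 𝒢.r γ ∈ U} // 𝒢.s q.1.1 = 𝒢.s q.2.1}

lemma lc_mem (p : LD 𝒢 U) : 𝒢.s (lact 𝒢 U p.1.1 p.1.2).1 = 𝒢.s p.1.2.1 := by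
  have h' : 𝒢.s p.1.1.1 = 𝒢.r p.1.2.1 := congrArg Subtype.val p.2
  rw [lact_val 𝒢 U h']; exact 𝒢.s_mul _ _ h'

/-- The inverse direction morphism carrier. -/
noncomputable def linvG (q : LC 𝒢 U) : G := 𝒢.mul q.1.1.1 (𝒢.inv q.1.2.1)

lemma ld_mem1 (q : LC 𝒢 U) : 𝒢.s q.1.1.1 = 𝒢.r (𝒢.inv q.1.2.1) := by
  rw [𝒢.r_inv]; exact q.2

lemma linvG_memK (q : LC 𝒢 U) : 𝒢.r (linvG 𝒢 U q) ∈ U ∧ 𝒢.s (linvG 𝒢 U q) ∈ U := by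
  unfold linvG
  constructor
  · rw [𝒢.r_mul _ _ (ld_mem1 𝒢 U q)]; exact q.1.1.2
  · rw [𝒢.s_mul _ _ (ld_mem1 𝒢 U q), 𝒢.s_inv]; exact q.1.2.2

lemma linv_comp (q : LC 𝒢 U) :
    (res 𝒢 U).s (⟨linvG 𝒢 U q, linvG_memK 𝒢 U q⟩ : {γ : G // 𝒢.r γ ∈ U ∧ 𝒢.s γ ∈ U}) =
      (leftA 𝒢 U).ρ q.1.2 := by
  refine Subtype.ext ?_
  show 𝒢.s (linvG 𝒢 U q) = 𝒢.r q.1.2.1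
  unfold linvG
  rw [𝒢.s_mul _ _ (ld_mem1 𝒢 U q), 𝒢.s_inv]

/-- The homeomorphism underlying properness of the left action. -/
noncomputable def leftHomeo : LD 𝒢 U ≃ₜ LC 𝒢 U where
  toFun p := ⟨(lact 𝒢 U p.1.1 p.1.2, p.1.2), lc_mem 𝒢 U p⟩
  invFun q := ⟨(⟨linvG 𝒢 U q, linvG_memK 𝒢 U q⟩, q.1.2), linv_comp 𝒢 U q⟩
  left_inv p := by
    have h' : 𝒢.s p.1.1.1 = 𝒢.r p.1.2.1 := congrArg Subtype.val p.2
    refine Subtype.ext (Prod.ext ?_ rfl)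
    refine Subtype.ext ?_
    show 𝒢.mul (lact 𝒢 U p.1.1 p.1.2).1 (𝒢.inv p.1.2.1) = p.1.1.1
    rw [lact_val 𝒢 U h']
    exact cancel₃ 𝒢 h'
  right_inv q := by
    refine Subtype.ext (Prod.ext ?_ rfl)
    refine Subtype.ext ?_
    refine (lact_val 𝒢 U ?_).trans ?_
    · show 𝒢.s (linvG 𝒢 U q) = 𝒢.r q.1.2.1
      unfold linvG
      rw [𝒢.s_mul _ _ (ld_mem1 𝒢 U q), 𝒢.s_inv]
    · show 𝒢.mul (linvG 𝒢 U q) q.1.2.1 = q.1.1.1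
      unfold linvG
      exact cancel₁ 𝒢 q.2
  continuous_toFun := by
    have c0 : Continuous fun p : LD 𝒢 U => 𝒢.mul p.1.1.1 p.1.2.1 :=
      𝒢.continuousOn_mul.comp_continuous
        ((continuous_subtype_val.comp (continuous_fst.comp continuous_subtype_val)).prodMk
          (continuous_subtype_val.comp (continuous_snd.comp continuous_subtype_val)))
        (fun p => congrArg Subtype.val p.2)
    have c1 : Continuous fun p : LD 𝒢 U => lact 𝒢 U p.1.1 p.1.2 := by
      rw [Topology.IsEmbedding.subtypeVal.isInducing.continuous_iff]
      exact c0.congr fun p => (lact_val 𝒢 U (congrArg Subtype.val p.2)).symm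
    exact (c1.prodMk (continuous_snd.comp continuous_subtype_val)).subtype_mk (lc_mem 𝒢 U)
  continuous_invFun := by
    have c0 : Continuous (linvG 𝒢 U) :=
      𝒢.continuousOn_mul.comp_continuous
        ((continuous_subtype_val.comp (continuous_fst.comp continuous_subtype_val)).prodMk
          (𝒢.continuous_inv.comp (continuous_subtype_val.comp
            (continuous_snd.comp continuous_subtype_val))))
        (fun q => ld_mem1 𝒢 U q)
    exact (((c0.subtype_mk (linvG_memK 𝒢 U)).prodMk
      (continuous_snd.comp continuous_subtype_val)).subtype_mk (linv_comp 𝒢 U))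

lemma leftA_proper [T2Space O] : (leftA 𝒢 U).Proper := by
  have hC : IsClosed {q : {γ : G // 𝒢.r γ ∈ U} × {γ : G // 𝒢.r γ ∈ U} |
      𝒢.s q.1.1 = 𝒢.s q.2.1} :=
    isClosed_eq ((𝒢.continuous_s.comp continuous_subtype_val).comp continuous_fst)
      ((𝒢.continuous_s.comp continuous_subtype_val).comp continuous_snd)
  exact (hC.isClosedEmbedding_subtypeVal.comp (leftHomeo 𝒢 U).isClosedEmbedding).isProperMap

/-! ### Properness of the right action -/

abbrev RD := {p : {γ : G // 𝒢.r γ ∈ U} × G // (rightA 𝒢 U).σ p.1 = 𝒢.r p.2}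

abbrev RC := {q : {γ : G // 𝒢.r γ ∈ U} × {γ : G // 𝒢.r γ ∈ U} // 𝒢.r q.1.1 = 𝒢.r q.2.1}

lemma rc_mem (p : RD 𝒢 U) : 𝒢.r (ract 𝒢 U p.1.1 p.1.2).1 = 𝒢.r p.1.1.1 := by
  rw [ract_val 𝒢 U p.2]; exact 𝒢.r_mul _ _ p.2

noncomputable def rinvG (q : RC 𝒢 U) : G := 𝒢.mul (𝒢.inv q.1.2.1) q.1.1.1

lemma rd_mem1 (q : RC 𝒢 U) : 𝒢.s (𝒢.inv q.1.2.1) = 𝒢.r q.1.1.1 := by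
  rw [𝒢.s_inv]; exact q.2.symm

lemma rinv_comp (q : RC 𝒢 U) : (rightA 𝒢 U).σ q.1.2 = 𝒢.r (rinvG 𝒢 U q) := by
  show 𝒢.s q.1.2.1 = 𝒢.r (rinvG 𝒢 U q)
  unfold rinvG
  rw [𝒢.r_mul _ _ (rd_mem1 𝒢 U q), 𝒢.r_inv]

/-- The homeomorphism underlying properness of the right action. -/
noncomputable def rightHomeo : RD 𝒢 U ≃ₜ RC 𝒢 U where
  toFun p := ⟨(ract 𝒢 U p.1.1 p.1.2, p.1.1), rc_mem 𝒢 U p⟩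
  invFun q := ⟨(q.1.2, rinvG 𝒢 U q), rinv_comp 𝒢 U q⟩
  left_inv p := by
    have h' : 𝒢.s p.1.1.1 = 𝒢.r p.1.2 := p.2
    refine Subtype.ext (Prod.ext rfl ?_)
    show 𝒢.mul (𝒢.inv p.1.1.1) (ract 𝒢 U p.1.1 p.1.2).1 = p.1.2
    rw [ract_val 𝒢 U h']
    exact cancel₄ 𝒢 h'
  right_inv q := by
    refine Subtype.ext (Prod.ext ?_ rfl)
    refine Subtype.ext ?_
    refine (ract_val 𝒢 U ?_).trans ?_
    · exact rinv_comp 𝒢 U q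
    · show 𝒢.mul q.1.2.1 (rinvG 𝒢 U q) = q.1.1.1
      unfold rinvG
      exact cancel₂ 𝒢 q.2
  continuous_toFun := by
    have c0 : Continuous fun p : RD 𝒢 U => 𝒢.mul p.1.1.1 p.1.2 :=
      𝒢.continuousOn_mul.comp_continuous
        ((continuous_subtype_val.comp (continuous_fst.comp continuous_subtype_val)).prodMk
          (continuous_snd.comp continuous_subtype_val))
        (fun p => p.2)
    have c1 : Continuous fun p : RD 𝒢 U => ract 𝒢 U p.1.1 p.1.2 := by
      rw [Topology.IsEmbedding.subtypeVal.isInducing.continuous_iff]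
      exact c0.congr fun p => (ract_val 𝒢 U p.2).symm
    exact (c1.prodMk (continuous_fst.comp continuous_subtype_val)).subtype_mk (rc_mem 𝒢 U)
  continuous_invFun := by
    have c0 : Continuous (rinvG 𝒢 U) :=
      𝒢.continuousOn_mul.comp_continuous
        ((𝒢.continuous_inv.comp (continuous_subtype_val.comp
            (continuous_snd.comp continuous_subtype_val))).prodMk
          (continuous_subtype_val.comp (continuous_fst.comp continuous_subtype_val)))
        (fun q => rd_mem1 𝒢 U q)
    exact (((continuous_snd.comp continuous_subtype_val).prodMk c0).subtype_mk
      (rinv_comp 𝒢 U))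

lemma rightA_proper [T2Space O] : (rightA 𝒢 U).Proper := by
  have hC : IsClosed {q : {γ : G // 𝒢.r γ ∈ U} × {γ : G // 𝒢.r γ ∈ U} |
      𝒢.r q.1.1 = 𝒢.r q.2.1} :=
    isClosed_eq ((𝒢.continuous_r.comp continuous_subtype_val).comp continuous_fst)
      ((𝒢.continuous_r.comp continuous_subtype_val).comp continuous_snd)
  exact (hC.isClosedEmbedding_subtypeVal.comp (rightHomeo 𝒢 U).isClosedEmbedding).isProperMap

/-! ### The equivalence -/

lemma bim_equiv [T2Space O] (h𝒢 : 𝒢.OpenMaps) (hU : IsOpen U)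
    (hfull : ∀ γ : G, ∃ γ₁ γ₂ : G, 𝒢.s γ₁ = 𝒢.r γ₂ ∧ 𝒢.s γ₁ ∈ U ∧ 𝒢.mul γ₁ γ₂ = γ) :
    IsEquivalence (bim 𝒢 U) where
  free_left := leftA_free 𝒢 U
  proper_left := leftA_proper 𝒢 U
  free_right := rightA_free 𝒢 U
  proper_right := rightA_proper 𝒢 U
  ρ_open := isOpenMap_restr h𝒢.1 (hU.preimage 𝒢.continuous_r) _ (fun a => rfl)
  ρ_surj := fun x => ⟨⟨𝒢.unit x.1, by rw [𝒢.r_unit]; exact x.2⟩, Subtype.ext (𝒢.r_unit x.1)⟩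
  ρ_fibres := by
    intro ω ω'
    constructor
    · intro h
      have hval : 𝒢.r ω.1 = 𝒢.r ω'.1 := congrArg Subtype.val h
      have hcm : 𝒢.s (𝒢.inv ω.1) = 𝒢.r ω'.1 := by rw [𝒢.s_inv]; exact hval
      have hσ : 𝒢.s ω.1 = 𝒢.r (𝒢.mul (𝒢.inv ω.1) ω'.1) := by
        rw [𝒢.r_mul _ _ hcm, 𝒢.r_inv]
      refine ⟨𝒢.mul (𝒢.inv ω.1) ω'.1, hσ, ?_⟩
      exact Subtype.ext ((ract_val 𝒢 U hσ).trans (cancel₂ 𝒢 hval.symm))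
    · rintro ⟨η, hσ, hact⟩
      have hσ' : 𝒢.s ω.1 = 𝒢.r η := hσ
      have h1 : 𝒢.mul ω.1 η = ω'.1 := by
        rw [← ract_val 𝒢 U hσ']; exact congrArg Subtype.val hact
      refine Subtype.ext ?_
      show 𝒢.r ω.1 = 𝒢.r ω'.1
      rw [← h1, 𝒢.r_mul _ _ hσ']
  σ_open := h𝒢.2.comp (hU.preimage 𝒢.continuous_r).isOpenMap_subtype_val
  σ_surj := by
    intro x
    obtain ⟨γ₁, γ₂, hc, hmem, he⟩ := hfull (𝒢.unit x)
    have hr : 𝒢.r γ₂ ∈ U := hc ▸ hmem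
    refine ⟨⟨γ₂, hr⟩, ?_⟩
    show 𝒢.s γ₂ = x
    have hs := 𝒢.s_mul γ₁ γ₂ hc
    rw [he, 𝒢.s_unit] at hs
    exact hs.symm
  σ_fibres := by
    intro ω ω'
    constructor
    · intro h
      have h' : 𝒢.s ω.1 = 𝒢.s ω'.1 := h
      have hcm : 𝒢.s ω'.1 = 𝒢.r (𝒢.inv ω.1) := by rw [𝒢.r_inv]; exact h'.symm
      have memr : 𝒢.r (𝒢.mul ω'.1 (𝒢.inv ω.1)) ∈ U := by
        rw [𝒢.r_mul _ _ hcm]; exact ω'.2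
      have mems : 𝒢.s (𝒢.mul ω'.1 (𝒢.inv ω.1)) ∈ U := by
        rw [𝒢.s_mul _ _ hcm, 𝒢.s_inv]; exact ω.2
      have hsr : 𝒢.s (𝒢.mul ω'.1 (𝒢.inv ω.1)) = 𝒢.r ω.1 := by
        rw [𝒢.s_mul _ _ hcm, 𝒢.s_inv]
      refine ⟨⟨𝒢.mul ω'.1 (𝒢.inv ω.1), memr, mems⟩, Subtype.ext hsr, ?_⟩
      exact Subtype.ext ((lact_val 𝒢 U hsr).trans (cancel₁ 𝒢 h'.symm))
    · rintro ⟨γ, hcomp, hact⟩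
      have h' : 𝒢.s γ.1 = 𝒢.r ω.1 := congrArg Subtype.val hcomp
      have h1 : 𝒢.mul γ.1 ω.1 = ω'.1 := by
        rw [← lact_val 𝒢 U h']; exact congrArg Subtype.val hact
      show 𝒢.s ω.1 = 𝒢.s ω'.1
      rw [← h1, 𝒢.s_mul _ _ h']

end FullOpenAux



/-- **Restriction to a full open subset.**  Let `𝒢` be a locally compact Hausdorff groupoid
with open range and source maps and let `U ⊆ 𝒢⁽⁰⁾` be a full open subset.  Then
`G_U^U = r⁻¹(U) ∩ s⁻¹(U)`, with the restricted operations, is a locally compact Hausdorff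
groupoid with open range and source maps, and `G^U = r⁻¹(U)`, equipped with the left
`G_U^U`-action and the right `𝒢`-action given by multiplication, is a `G_U^U`-`𝒢`-equivalence. -/
theorem restriction_to_full_open_subset
    [LocallyCompactSpace G] [T2Space G] [LocallyCompactSpace O] [T2Space O]
    (𝒢 : TopGroupoid G O) (h𝒢 : 𝒢.OpenMaps)
    (U : Set O) (hU : IsOpen U)
    (hfull : ∀ γ : G, ∃ γ₁ γ₂ : G, 𝒢.s γ₁ = 𝒢.r γ₂ ∧ 𝒢.s γ₁ ∈ U ∧ 𝒢.mul γ₁ γ₂ = γ) :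
    LocallyCompactSpace {γ : G // 𝒢.r γ ∈ U ∧ 𝒢.s γ ∈ U} ∧
    T2Space {γ : G // 𝒢.r γ ∈ U ∧ 𝒢.s γ ∈ U} ∧
    ∃ 𝒦 : TopGroupoid {γ : G // 𝒢.r γ ∈ U ∧ 𝒢.s γ ∈ U} {x : O // x ∈ U},
      -- the structure maps of `𝒦` are the restrictions of those of `𝒢`
      (∀ γ, ((𝒦.r γ : {x : O // x ∈ U}) : O) = 𝒢.r (γ : G)) ∧
      (∀ γ, ((𝒦.s γ : {x : O // x ∈ U}) : O) = 𝒢.s (γ : G)) ∧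
      (∀ x : {x : O // x ∈ U}, ((𝒦.unit x : {γ : G // 𝒢.r γ ∈ U ∧ 𝒢.s γ ∈ U}) : G)
          = 𝒢.unit (x : O)) ∧
      (∀ γ γ' : {γ : G // 𝒢.r γ ∈ U ∧ 𝒢.s γ ∈ U}, 𝒢.s (γ : G) = 𝒢.r (γ' : G) →
        ((𝒦.mul γ γ' : {γ : G // 𝒢.r γ ∈ U ∧ 𝒢.s γ ∈ U}) : G) = 𝒢.mul (γ : G) (γ' : G)) ∧
      (∀ γ, ((𝒦.inv γ : {γ : G // 𝒢.r γ ∈ U ∧ 𝒢.s γ ∈ U}) : G) = 𝒢.inv (γ : G)) ∧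
      -- `𝒦` has open range and source maps
      𝒦.OpenMaps ∧
      -- `G^U = r⁻¹(U)` is a `𝒦`-`𝒢`-equivalence via left/right multiplication
      ∃ M : GBimodule 𝒦 𝒢 {γ : G // 𝒢.r γ ∈ U},
        (∀ ω : {γ : G // 𝒢.r γ ∈ U}, ((M.left.ρ ω : {x : O // x ∈ U}) : O) = 𝒢.r (ω : G)) ∧
        (∀ ω : {γ : G // 𝒢.r γ ∈ U}, M.right.σ ω = 𝒢.s (ω : G)) ∧
        (∀ (γ : {γ : G // 𝒢.r γ ∈ U ∧ 𝒢.s γ ∈ U}) (ω : {γ : G // 𝒢.r γ ∈ U}),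
          𝒢.s (γ : G) = 𝒢.r (ω : G) →
            ((M.left.act γ ω : {γ : G // 𝒢.r γ ∈ U}) : G) = 𝒢.mul (γ : G) (ω : G)) ∧
        (∀ (ω : {γ : G // 𝒢.r γ ∈ U}) (γ : G), 𝒢.s (ω : G) = 𝒢.r γ →
            ((M.right.act ω γ : {γ : G // 𝒢.r γ ∈ U}) : G) = 𝒢.mul (ω : G) γ) ∧
        IsEquivalence M := by
  refine ⟨?_, inferInstance, FullOpenAux.res 𝒢 U, fun γ => rfl, fun γ => rfl, fun x => rfl,
    fun γ γ' h => FullOpenAux.rmul_val 𝒢 U h, fun γ => rfl,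
    FullOpenAux.res_openMaps 𝒢 U h𝒢 hU, FullOpenAux.bim 𝒢 U, fun ω => rfl, fun ω => rfl,
    fun γ ω h => FullOpenAux.lact_val 𝒢 U h, fun ω γ h => FullOpenAux.ract_val 𝒢 U h,
    FullOpenAux.bim_equiv 𝒢 U h𝒢 hU hfull⟩
  exact ((hU.preimage 𝒢.continuous_r).inter (hU.preimage 𝒢.continuous_s)).locallyCompactSpace

end Statement1
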